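/- arXiv:2102.06661 — 4 statements merged into one kernel-verified Lean document; each statement's English description precedes it below -/
import Mathlib

section
/- Let γ > 1 and let q_l = (ρ_l, ρ_l u_l, ρ_l v_l, E_l) and q_r = (ρ_r, ρ_r u_r, ρ_r v_r, E_r) be states with ρ_l > 0 and ρ_r > 0, and let H_s = (E_s + p(q_s))/ρ_s for s ∈ {l, r}. Define the Roe averages ρ̃ = √(ρ_l ρ_r), ũ = (√ρ_l·u_l + √ρ_r·u_r)/(√ρ_l + √ρ_r), ṽ = (√ρ_l·v_l + √ρ_r·v_r)/(√ρ_l + √ρ_r), H̃ = (√ρ_l·H_l + √ρ_r·H_r)/(√ρ_l + √ρ_r), and the Roe state q̃ = (ρ̃, ρ̃ũ, ρ̃ṽ, Ẽ) with Ẽ = ρ̃(2H̃ + (γ − 1)(ũ² + ṽ²))/(2γ). Then the Roe property holds: f(q_r) − f(q_l) = A(q̃)·(q_r − q_l), where A(q̃) is the Jacobian matrix of the 2D Euler x-flux f at q̃. -/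
open Matrix

/-- Ideal-gas pressure `p(q) = (γ-1)(E - (m² + n²)/(2ρ))` in conserved
variables `q = (ρ, m, n, E)`. -/
noncomputable def pres (γ : ℝ) (q : Fin 4 → ℝ) : ℝ :=
  (γ - 1) * (q 3 - (q 1 ^ 2 + q 2 ^ 2) / (2 * q 0))

/-- The x-direction flux of the 2D compressible Euler equations. -/
noncomputable def flux (γ : ℝ) (q : Fin 4 → ℝ) : Fin 4 → ℝ :=
  ![q 1,
    q 1 ^ 2 / q 0 + pres γ q,
    q 1 * q 2 / q 0,
    (q 3 + pres γ q) * q 1 / q 0]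

/-- The Jacobian matrix `A(q)` of the flux: the matrix of the partial
derivatives of `flux γ` at `q`. -/
noncomputable def jac (γ : ℝ) (q : Fin 4 → ℝ) : Matrix (Fin 4) (Fin 4) ℝ :=
  Matrix.of fun i j => fderiv ℝ (flux γ) q (Pi.single j 1) i

lemma hasFDerivAt_inv_comp {f : (Fin 4 → ℝ) → ℝ} {f' : (Fin 4 → ℝ) →L[ℝ] ℝ}
    {x : Fin 4 → ℝ} (hf : HasFDerivAt f f' x) (h : f x ≠ 0) :
    HasFDerivAt (fun y => (f y)⁻¹) ((-(f x ^ 2)⁻¹) • f') x := by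
  have h2 := (hasFDerivAt_inv h).comp x hf
  have : (ContinuousLinearMap.toSpanSingleton ℝ (-(f x ^ 2)⁻¹)).comp f'
      = (-(f x ^ 2)⁻¹) • f' := by
    ext v; simp [mul_comm]
  rw [this] at h2
  exact h2

set_option maxHeartbeats 2000000 in
lemma jac_eq (γ : ℝ) (q : Fin 4 → ℝ) (h0 : q 0 ≠ 0) :
    jac γ q = !![0, 1, 0, 0;
      (γ-1)*(q 1^2 + q 2^2)/(2*q 0^2) - q 1^2/q 0^2, (3-γ)*q 1/q 0, (1-γ)*q 2/q 0, γ-1;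
      -(q 1*q 2)/q 0^2, q 2/q 0, q 1/q 0, 0;
      (γ-1)*(q 1^3 + q 1*q 2^2)/q 0^3 - γ*q 3*q 1/q 0^2,
        γ*q 3/q 0 - (γ-1)*(3*q 1^2 + q 2^2)/(2*q 0^2), (1-γ)*q 1*q 2/q 0^2, γ*q 1/q 0] := by
  have hp : ∀ k : Fin 4, HasFDerivAt (fun x : Fin 4 → ℝ => x k)
      (ContinuousLinearMap.proj k : (Fin 4 → ℝ) →L[ℝ] ℝ) q :=
    fun k => (ContinuousLinearMap.proj k : (Fin 4 → ℝ) →L[ℝ] ℝ).hasFDerivAt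
  have h20 : (2 : ℝ) * q 0 ≠ 0 := by simpa using h0
  have hinv := hasFDerivAt_inv_comp (hp 0) h0
  have hinv2 := hasFDerivAt_inv_comp ((hp 0).const_mul 2) h20
  have hP := ((hp 3).sub ((((hp 1).mul (hp 1)).add ((hp 2).mul (hp 2))).mul hinv2)).const_mul (γ - 1)
  have H1 := (((hp 1).mul (hp 1)).mul hinv).add hP
  have H2 := ((hp 1).mul (hp 2)).mul hinv
  have H3 := ((hp 3).add hP).mul ((hp 1).mul hinv)
  have e0 : (fun x : Fin 4 → ℝ => flux γ x 0) = fun x => x 1 := by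
    funext x; simp [flux]
  have e1 : (fun x : Fin 4 → ℝ => flux γ x 1)
      = fun x => x 1 * x 1 * (x 0)⁻¹ + (γ-1) * (x 3 - (x 1 * x 1 + x 2 * x 2) * (2 * x 0)⁻¹) := by
    funext x; simp [flux, pres]; ring
  have e2 : (fun x : Fin 4 → ℝ => flux γ x 2) = fun x => x 1 * x 2 * (x 0)⁻¹ := by
    funext x; simp [flux]; ring
  have e3 : (fun x : Fin 4 → ℝ => flux γ x 3)
      = fun x => (x 3 + (γ-1) * (x 3 - (x 1 * x 1 + x 2 * x 2) * (2 * x 0)⁻¹)) * (x 1 * (x 0)⁻¹) := by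
    funext x; simp [flux, pres]; ring
  have hd : ∀ i, DifferentiableAt ℝ (fun x => flux γ x i) q := by
    intro i
    fin_cases i
    · exact e0 ▸ (hp 1).differentiableAt
    · exact e1 ▸ H1.differentiableAt
    · exact e2 ▸ H2.differentiableAt
    · exact e3 ▸ H3.differentiableAt
  have hpi : fderiv ℝ (flux γ) q
      = ContinuousLinearMap.pi (fun i => fderiv ℝ (fun x => flux γ x i) q) := fderiv_pi hd
  ext i j
  fin_cases i <;> fin_cases j <;>
    simp only [Fin.zero_eta, Fin.mk_one, Fin.reduceFinMk, jac, Matrix.of_apply, hpi,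
      ContinuousLinearMap.pi_apply, e0, e1, e2, e3,
      (hp 1).fderiv,
      HasFDerivAt.fderiv (f := fun x : Fin 4 → ℝ => x 1 * x 1 * (x 0)⁻¹ + (γ-1) * (x 3 - (x 1 * x 1 + x 2 * x 2) * (2 * x 0)⁻¹)) H1,
      HasFDerivAt.fderiv (f := fun x : Fin 4 → ℝ => x 1 * x 2 * (x 0)⁻¹) H2,
      HasFDerivAt.fderiv (f := fun x : Fin 4 → ℝ => (x 3 + (γ-1) * (x 3 - (x 1 * x 1 + x 2 * x 2) * (2 * x 0)⁻¹)) * (x 1 * (x 0)⁻¹)) H3] <;>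
    simp only [ContinuousLinearMap.add_apply, ContinuousLinearMap.sub_apply,
      ContinuousLinearMap.smul_apply, ContinuousLinearMap.comp_apply,
      ContinuousLinearMap.proj_apply, ContinuousLinearMap.smulRight_apply,
      ContinuousLinearMap.one_apply, smul_eq_mul, Pi.single_apply, Fin.isValue,
      Fin.reduceEq, reduceIte, mul_zero, zero_mul, mul_one, one_mul, add_zero,
      zero_add, sub_zero, zero_sub, neg_neg, neg_zero, Matrix.cons_val_zero, Matrix.cons_val_one,
      Matrix.cons_val_two, Matrix.cons_val_three, Matrix.head_cons, Matrix.tail_cons, Pi.mul_apply,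
      Pi.add_apply, Pi.sub_apply, Pi.pow_apply] <;>
    field_simp <;> ring

set_option maxHeartbeats 4000000 in
theorem stmt4 (γ : ℝ) (hγ : 1 < γ)
    (ρl ul vl El ρr ur vr Er : ℝ) (hρl : 0 < ρl) (hρr : 0 < ρr)
    (ql qr : Fin 4 → ℝ)
    (hql : ql = ![ρl, ρl * ul, ρl * vl, El])
    (hqr : qr = ![ρr, ρr * ur, ρr * vr, Er])
    (Hl Hr : ℝ)
    (hHl : Hl = (El + pres γ ql) / ρl)
    (hHr : Hr = (Er + pres γ qr) / ρr)
    (ρt ut vt Ht Et : ℝ)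
    (hρt : ρt = Real.sqrt (ρl * ρr))
    (hut : ut = (Real.sqrt ρl * ul + Real.sqrt ρr * ur) / (Real.sqrt ρl + Real.sqrt ρr))
    (hvt : vt = (Real.sqrt ρl * vl + Real.sqrt ρr * vr) / (Real.sqrt ρl + Real.sqrt ρr))
    (hHt : Ht = (Real.sqrt ρl * Hl + Real.sqrt ρr * Hr) / (Real.sqrt ρl + Real.sqrt ρr))
    (hEt : Et = ρt * (2 * Ht + (γ - 1) * (ut ^ 2 + vt ^ 2)) / (2 * γ))
    (qt : Fin 4 → ℝ) (hqt : qt = ![ρt, ρt * ut, ρt * vt, Et]) :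
    flux γ qr - flux γ ql = jac γ qt *ᵥ (qr - ql) := by
  have hγ0 : γ ≠ 0 := by linarith
  have hs0 : (0:ℝ) < Real.sqrt ρl := Real.sqrt_pos.2 hρl
  have ht0 : (0:ℝ) < Real.sqrt ρr := Real.sqrt_pos.2 hρr
  have h0 : qt 0 ≠ 0 := by
    rw [hqt, hρt]
    simp only [Matrix.cons_val_zero]
    positivity
  rw [jac_eq γ qt h0]
  subst hqt hEt hHt hut hvt hρt hHl hHr hql hqr
  have hst : Real.sqrt (ρl * ρr) = Real.sqrt ρl * Real.sqrt ρr := Real.sqrt_mul hρl.le _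
  have hs : Real.sqrt ρl ^ 2 = ρl := Real.sq_sqrt hρl.le
  have ht : Real.sqrt ρr ^ 2 = ρr := Real.sq_sqrt hρr.le
  set s := Real.sqrt ρl with hsdef
  set t := Real.sqrt ρr with htdef
  have hstpos : (0:ℝ) < s + t := by positivity
  funext i
  fin_cases i <;>
    simp only [Fin.zero_eta, Fin.mk_one, Fin.reduceFinMk, flux, pres, Pi.sub_apply,
      Matrix.mulVec, dotProduct, Fin.sum_univ_four, Matrix.cons_val_zero,
      Matrix.cons_val_one, Matrix.cons_val_two, Matrix.cons_val_three, Matrix.head_cons,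
      Matrix.tail_cons, Matrix.cons_val', Matrix.cons_val_fin_one, Matrix.empty_val',
      Matrix.of_apply, hst, Matrix.vecHead, Matrix.vecTail, Function.comp_apply,
      Fin.succ_zero_eq_one, Fin.succ_one_eq_two] <;>
    rw [← hs, ← ht] <;>
    field_simp <;>
    ring
end

section
/- Let ρ_l, ρ_r > 0 and u_l, v_l, H_l, u_r, v_r, H_r ∈ ℝ, and define the √ρ-weighted Roe means ũ = (√ρ_l·u_l + √ρ_r·u_r)/(√ρ_l + √ρ_r), ṽ = (√ρ_l·v_l + √ρ_r·v_r)/(√ρ_l + √ρ_r), H̃ = (√ρ_l·H_l + √ρ_r·H_r)/(√ρ_l + √ρ_r). If H_l − (u_l² + v_l²)/2 > 0 and H_r − (u_r² + v_r²)/2 > 0, then H̃ − (ũ² + ṽ²)/2 > 0. In particular, for γ > 1 the Roe mean speed of sound c̃ = √((γ − 1)(H̃ − (ũ² + ṽ²)/2)) is well defined and positive. -/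
theorem stmt6 (ρl ρr ul vl Hl ur vr Hr ut vt Ht : ℝ)
    (hρl : 0 < ρl) (hρr : 0 < ρr)
    (hut : ut = (Real.sqrt ρl * ul + Real.sqrt ρr * ur) / (Real.sqrt ρl + Real.sqrt ρr))
    (hvt : vt = (Real.sqrt ρl * vl + Real.sqrt ρr * vr) / (Real.sqrt ρl + Real.sqrt ρr))
    (hHt : Ht = (Real.sqrt ρl * Hl + Real.sqrt ρr * Hr) / (Real.sqrt ρl + Real.sqrt ρr))
    (hl : 0 < Hl - (ul ^ 2 + vl ^ 2) / 2)
    (hr : 0 < Hr - (ur ^ 2 + vr ^ 2) / 2) :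
    0 < Ht - (ut ^ 2 + vt ^ 2) / 2 ∧
    ∀ γ : ℝ, 1 < γ → 0 < Real.sqrt ((γ - 1) * (Ht - (ut ^ 2 + vt ^ 2) / 2)) := by
  set a := Real.sqrt ρl with ha
  set b := Real.sqrt ρr with hb
  have hap : 0 < a := Real.sqrt_pos.mpr hρl
  have hbp : 0 < b := Real.sqrt_pos.mpr hρr
  have hs : 0 < a + b := by linarith
  have hu2 : ut ^ 2 ≤ (a * ul ^ 2 + b * ur ^ 2) / (a + b) := by
    rw [hut, div_pow, div_le_div_iff₀ (by positivity) hs]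
    nlinarith [mul_nonneg (mul_pos hs (mul_pos hap hbp)).le (sq_nonneg (ul - ur))]
  have hv2 : vt ^ 2 ≤ (a * vl ^ 2 + b * vr ^ 2) / (a + b) := by
    rw [hvt, div_pow, div_le_div_iff₀ (by positivity) hs]
    nlinarith [mul_nonneg (mul_pos hs (mul_pos hap hbp)).le (sq_nonneg (vl - vr))]
  have hpos : 0 < (a * (Hl - (ul ^ 2 + vl ^ 2) / 2) + b * (Hr - (ur ^ 2 + vr ^ 2) / 2)) / (a + b) := by
    positivity
  have heq : (a * (Hl - (ul ^ 2 + vl ^ 2) / 2) + b * (Hr - (ur ^ 2 + vr ^ 2) / 2)) / (a + b)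
      = Ht - ((a * ul ^ 2 + b * ur ^ 2) / (a + b) + (a * vl ^ 2 + b * vr ^ 2) / (a + b)) / 2 := by
    rw [hHt]; field_simp; ring
  have key : 0 < Ht - (ut ^ 2 + vt ^ 2) / 2 := by
    rw [heq] at hpos; linarith
  exact ⟨key, fun γ hγ => Real.sqrt_pos.mpr (mul_pos (by linarith) key)⟩
end

section
/- Let γ > 1 and let q_l, q_r ∈ ℝ⁴ be states with ρ_l, ρ_r > 0 whose Roe averages ρ̃, ũ, ṽ, H̃ satisfy H̃ − (ũ² + ṽ²)/2 > 0, and set c̃ = √((γ − 1)(H̃ − (ũ² + ṽ²)/2)). Let r̃₁ = (1, ũ − c̃, ṽ, H̃ − c̃ũ) and r̃₄ = (1, ũ + c̃, ṽ, H̃ + c̃ũ) be the acoustic right eigenvectors and l̃₁, l̃₄ the corresponding normalized left eigenvectors at the Roe state, and let Δq = q_r − q_l. Then the Rankine–Hugoniot residual 𝔯 = f(q_r) − f(q_l) − ũ·Δq satisfies 𝔯 = c̃·((l̃₄·Δq)·r̃₄ − (l̃₁·Δq)·r̃₁); that is, 𝔯/c̃ is the difference of the right-running and left-running acoustic wave components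 of the jump. -/
open Matrix

set_option maxHeartbeats 1000000 in
private lemma roe_acoustic_part (γ ut vt Ht ct : ℝ)
    (hct0 : ct ≠ 0)
    (hS0 : 2 * Ht - (ut ^ 2 + vt ^ 2) ≠ 0)
    (hc2 : ct ^ 2 = (γ - 1) * (Ht - (ut ^ 2 + vt ^ 2) / 2))
    (d : Fin 4 → ℝ) :
    ct • ((((1 / (ct * (2 * Ht - (ut ^ 2 + vt ^ 2)))) •
      ![-(Ht * ut) + (ut + ct) * (ut ^ 2 + vt ^ 2) / 2, -((ut ^ 2 + vt ^ 2) / 2) + (Ht - ct * ut), -ct * vt, ct]) ⬝ᵥ d) • ![1, ut + ct, vt, Ht + ct * ut] -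
      ((((1 / (ct * (2 * Ht - (ut ^ 2 + vt ^ 2)))) •
      ![Ht * ut - (ut - ct) * (ut ^ 2 + vt ^ 2) / 2, (ut ^ 2 + vt ^ 2) / 2 - (Ht + ct * ut), -ct * vt, ct]) ⬝ᵥ d) • ![1, ut - ct, vt, Ht - ct * ut])) =
    ![d 1 - ut * d 0,
      (d 1 - ut * d 0) * ut + (γ - 1) * ((ut ^ 2 + vt ^ 2) / 2 * d 0 - ut * d 1 - vt * d 2 + d 3),
      (d 1 - ut * d 0) * vt,
      (d 1 - ut * d 0) * Ht + (γ - 1) * ((ut ^ 2 + vt ^ 2) / 2 * d 0 - ut * d 1 - vt * d 2 + d 3) * ut] := by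
  have e4 : (((1 / (ct * (2 * Ht - (ut ^ 2 + vt ^ 2)))) •
      ![-(Ht * ut) + (ut + ct) * (ut ^ 2 + vt ^ 2) / 2, -((ut ^ 2 + vt ^ 2) / 2) + (Ht - ct * ut), -ct * vt, ct]) ⬝ᵥ d) =
      (1 / (ct * (2 * Ht - (ut ^ 2 + vt ^ 2)))) *
      ((-(Ht * ut) + (ut + ct) * (ut ^ 2 + vt ^ 2) / 2) * d 0 + (-((ut ^ 2 + vt ^ 2) / 2) + (Ht - ct * ut)) * d 1 + (-ct * vt) * d 2 + ct * d 3) := by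
    simp [dotProduct, Fin.sum_univ_four]; ring
  have e1 : (((1 / (ct * (2 * Ht - (ut ^ 2 + vt ^ 2)))) •
      ![Ht * ut - (ut - ct) * (ut ^ 2 + vt ^ 2) / 2, (ut ^ 2 + vt ^ 2) / 2 - (Ht + ct * ut), -ct * vt, ct]) ⬝ᵥ d) =
      (1 / (ct * (2 * Ht - (ut ^ 2 + vt ^ 2)))) *
      ((Ht * ut - (ut - ct) * (ut ^ 2 + vt ^ 2) / 2) * d 0 + ((ut ^ 2 + vt ^ 2) / 2 - (Ht + ct * ut)) * d 1 + (-ct * vt) * d 2 + ct * d 3) := by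
    simp [dotProduct, Fin.sum_univ_four]; ring
  rw [e4, e1]
  have key : ∀ x y : ℝ,
      ct * ((1 / (ct * (2 * Ht - (ut ^ 2 + vt ^ 2))) *
        ((-(Ht * ut) + (ut + ct) * (ut ^ 2 + vt ^ 2) / 2) * d 0 + (-((ut ^ 2 + vt ^ 2) / 2) + (Ht - ct * ut)) * d 1 + (-ct * vt) * d 2 + ct * d 3)) * x -
        (1 / (ct * (2 * Ht - (ut ^ 2 + vt ^ 2))) *
        ((Ht * ut - (ut - ct) * (ut ^ 2 + vt ^ 2) / 2) * d 0 + ((ut ^ 2 + vt ^ 2) / 2 - (Ht + ct * ut)) * d 1 + (-ct * vt) * d 2 + ct * d 3)) * y) =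
      (((-(Ht * ut) + (ut + ct) * (ut ^ 2 + vt ^ 2) / 2) * d 0 + (-((ut ^ 2 + vt ^ 2) / 2) + (Ht - ct * ut)) * d 1 + (-ct * vt) * d 2 + ct * d 3) * x -
       ((Ht * ut - (ut - ct) * (ut ^ 2 + vt ^ 2) / 2) * d 0 + ((ut ^ 2 + vt ^ 2) / 2 - (Ht + ct * ut)) * d 1 + (-ct * vt) * d 2 + ct * d 3) * y) /
      (2 * Ht - (ut ^ 2 + vt ^ 2)) := by
    intro x y; field_simp
  funext i
  fin_cases i <;>
    [skip; skip; skip; skip] <;>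
    (simp only [Pi.smul_apply, Pi.sub_apply, smul_eq_mul]
     rw [key, div_eq_iff hS0]
     simp [Matrix.cons_val_zero, Matrix.cons_val_one, Matrix.head_cons])
  · ring
  · linear_combination (2 * ((ut ^ 2 + vt ^ 2) / 2 * d 0 - ut * d 1 - vt * d 2 + d 3)) * hc2
  · ring
  · linear_combination (2 * ((ut ^ 2 + vt ^ 2) / 2 * d 0 - ut * d 1 - vt * d 2 + d 3) * ut) * hc2

set_option maxHeartbeats 2000000 in
private lemma roe_flux_part (γ : ℝ) (ql qr : Fin 4 → ℝ) (sl sr : ℝ)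
    (hsl : 0 < sl) (hsr : 0 < sr)
    (hql0 : ql 0 = sl ^ 2) (hqr0 : qr 0 = sr ^ 2)
    (ut vt Ht : ℝ)
    (hut : ut = (sl * (ql 1 / ql 0) + sr * (qr 1 / qr 0)) / (sl + sr))
    (hvt : vt = (sl * (ql 2 / ql 0) + sr * (qr 2 / qr 0)) / (sl + sr))
    (hHt : Ht = (sl * ((ql 3 + pres γ ql) / ql 0) + sr * ((qr 3 + pres γ qr) / qr 0)) / (sl + sr)) :
    flux γ qr - flux γ ql - ut • (qr - ql) =
    ![(qr 1 - ql 1) - ut * (qr 0 - ql 0),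
      ((qr 1 - ql 1) - ut * (qr 0 - ql 0)) * ut + (γ - 1) * ((ut ^ 2 + vt ^ 2) / 2 * (qr 0 - ql 0) - ut * (qr 1 - ql 1) - vt * (qr 2 - ql 2) + (qr 3 - ql 3)),
      ((qr 1 - ql 1) - ut * (qr 0 - ql 0)) * vt,
      ((qr 1 - ql 1) - ut * (qr 0 - ql 0)) * Ht + (γ - 1) * ((ut ^ 2 + vt ^ 2) / 2 * (qr 0 - ql 0) - ut * (qr 1 - ql 1) - vt * (qr 2 - ql 2) + (qr 3 - ql 3)) * ut] := by
  have hsl0 : sl ≠ 0 := hsl.ne'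
  have hsr0 : sr ≠ 0 := hsr.ne'
  have hslr : sl + sr ≠ 0 := by positivity
  have hsrl : sr + sl ≠ 0 := by positivity
  subst hut hvt hHt
  funext i
  fin_cases i <;>
    simp [flux, Pi.sub_apply, Pi.smul_apply, smul_eq_mul] <;>
    (try simp only [pres]
     try simp only [hql0, hqr0]
     field_simp
     ring)

theorem stmt7 (γ : ℝ) (hγ : 1 < γ) (ql qr : Fin 4 → ℝ)
    (hρl : 0 < ql 0) (hρr : 0 < qr 0)
    (ut vt Ht ct V2 : ℝ)
    -- Roe averages: `√ρ`-weighted means of the velocities and total enthalpies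
    (hut : ut = (Real.sqrt (ql 0) * (ql 1 / ql 0) + Real.sqrt (qr 0) * (qr 1 / qr 0)) /
      (Real.sqrt (ql 0) + Real.sqrt (qr 0)))
    (hvt : vt = (Real.sqrt (ql 0) * (ql 2 / ql 0) + Real.sqrt (qr 0) * (qr 2 / qr 0)) /
      (Real.sqrt (ql 0) + Real.sqrt (qr 0)))
    (hHt : Ht = (Real.sqrt (ql 0) * ((ql 3 + pres γ ql) / ql 0) +
      Real.sqrt (qr 0) * ((qr 3 + pres γ qr) / qr 0)) /
      (Real.sqrt (ql 0) + Real.sqrt (qr 0)))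
    (hpos : 0 < Ht - (ut ^ 2 + vt ^ 2) / 2)
    (hct : ct = Real.sqrt ((γ - 1) * (Ht - (ut ^ 2 + vt ^ 2) / 2)))
    (hV2 : V2 = ut ^ 2 + vt ^ 2)
    -- the acoustic right and (normalized) left eigenvectors at the Roe state
    (r1 r4 l1 l4 : Fin 4 → ℝ)
    (hr1 : r1 = ![1, ut - ct, vt, Ht - ct * ut])
    (hr4 : r4 = ![1, ut + ct, vt, Ht + ct * ut])
    (hl1 : l1 = (1 / (ct * (2 * Ht - V2))) •
      ![Ht * ut - (ut - ct) * V2 / 2, V2 / 2 - (Ht + ct * ut), -ct * vt, ct])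
    (hl4 : l4 = (1 / (ct * (2 * Ht - V2))) •
      ![-(Ht * ut) + (ut + ct) * V2 / 2, -(V2 / 2) + (Ht - ct * ut), -ct * vt, ct]) :
    flux γ qr - flux γ ql - ut • (qr - ql) =
      ct • ((l4 ⬝ᵥ (qr - ql)) • r4 - (l1 ⬝ᵥ (qr - ql)) • r1) := by
  subst hV2 hr1 hr4 hl1 hl4
  have hγ0 : (0:ℝ) < γ - 1 := by linarith
  have hc2 : ct ^ 2 = (γ - 1) * (Ht - (ut ^ 2 + vt ^ 2) / 2) := by
    rw [hct]; exact Real.sq_sqrt (le_of_lt (mul_pos hγ0 hpos))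
  have hct0 : ct ≠ 0 := by
    rw [hct]; exact (Real.sqrt_pos.2 (mul_pos hγ0 hpos)).ne'
  have hS0 : 2 * Ht - (ut ^ 2 + vt ^ 2) ≠ 0 := by linarith
  obtain ⟨sl, hslpos, hql0⟩ : ∃ s : ℝ, 0 < s ∧ ql 0 = s ^ 2 :=
    ⟨Real.sqrt (ql 0), Real.sqrt_pos.2 hρl, (Real.sq_sqrt hρl.le).symm⟩
  obtain ⟨sr, hsrpos, hqr0⟩ : ∃ s : ℝ, 0 < s ∧ qr 0 = s ^ 2 :=
    ⟨Real.sqrt (qr 0), Real.sqrt_pos.2 hρr, (Real.sq_sqrt hρr.le).symm⟩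
  have hsqrtl : Real.sqrt (ql 0) = sl := by rw [hql0, Real.sqrt_sq hslpos.le]
  have hsqrtr : Real.sqrt (qr 0) = sr := by rw [hqr0, Real.sqrt_sq hsrpos.le]
  rw [hsqrtl, hsqrtr] at hut hvt hHt
  have h2 := roe_acoustic_part γ ut vt Ht ct hct0 hS0 hc2 (qr - ql)
  simp only [Pi.sub_apply] at h2
  rw [h2]
  exact roe_flux_part γ ql qr sl sr hslpos hsrpos hql0 hqr0 ut vt Ht hut hvt hHt
end

section
/- Let γ > 1 and let q_l, q_r ∈ ℝ⁴ be states with ρ_l, ρ_r > 0 whose Roe averages ρ̃, ũ, ṽ, H̃ satisfy H̃ − (ũ² + ṽ²)/2 > 0, with c̃ = √((γ − 1)(H̃ − (ũ² + ṽ²)/2)). If the jump Δq = q_r − q_l lies in the span of the linear-wave eigenvectors r̃₂ = (1, ũ, ṽ, (ũ² + ṽ²)/2) and r̃₃ = (0, 0, 1, ṽ) at the Roe state (equivalently, if the acoustic wave strengths l̃₁·Δq and l̃₄·Δq both vanish), then the Rankine–Hugoniot residual vanishes: f(q_r) − f(q_l) = ũ·(q_r − q_l). -/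
open Matrix

theorem stmt8 (γ : ℝ) (hγ : 1 < γ) (ql qr : Fin 4 → ℝ)
    (hρl : 0 < ql 0) (hρr : 0 < qr 0)
    (ut vt Ht : ℝ)
    -- Roe averages: `√ρ`-weighted means of the velocities and total enthalpies
    (hut : ut = (Real.sqrt (ql 0) * (ql 1 / ql 0) + Real.sqrt (qr 0) * (qr 1 / qr 0)) /
      (Real.sqrt (ql 0) + Real.sqrt (qr 0)))
    (hvt : vt = (Real.sqrt (ql 0) * (ql 2 / ql 0) + Real.sqrt (qr 0) * (qr 2 / qr 0)) /
      (Real.sqrt (ql 0) + Real.sqrt (qr 0)))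
    (hHt : Ht = (Real.sqrt (ql 0) * ((ql 3 + pres γ ql) / ql 0) +
      Real.sqrt (qr 0) * ((qr 3 + pres γ qr) / qr 0)) /
      (Real.sqrt (ql 0) + Real.sqrt (qr 0)))
    (hpos : 0 < Ht - (ut ^ 2 + vt ^ 2) / 2)
    -- the jump lies in the span of the linear-wave eigenvectors r̃₂, r̃₃
    (hspan : qr - ql ∈ Submodule.span ℝ
      ({![1, ut, vt, (ut ^ 2 + vt ^ 2) / 2], ![0, 0, 1, vt]} : Set (Fin 4 → ℝ))) :
    flux γ qr - flux γ ql = ut • (qr - ql) := by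
  obtain ⟨a, b, hab⟩ := Submodule.mem_span_pair.mp hspan
  have e0 := congrFun hab 0
  have e1 := congrFun hab 1
  have e2 := congrFun hab 2
  have e3 := congrFun hab 3
  simp [Fin.isValue] at e0 e1 e2 e3
  set sl := Real.sqrt (ql 0) with hsl_def
  set sr := Real.sqrt (qr 0) with hsr_def
  have hsl : 0 < sl := Real.sqrt_pos.mpr hρl
  have hsr : 0 < sr := Real.sqrt_pos.mpr hρr
  have hsl2 : sl ^ 2 = ql 0 := Real.sq_sqrt hρl.le
  have hsr2 : sr ^ 2 = qr 0 := Real.sq_sqrt hρr.le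
  have hss : sl + sr ≠ 0 := by positivity
  have hslne : sl ≠ 0 := hsl.ne'
  have hsrne : sr ≠ 0 := hsr.ne'
  rw [← hsl2, ← hsr2] at e0
  have hut' : ut * (sl * sr * (sl + sr)) = ql 1 * sr + qr 1 * sl := by
    rw [hut, ← hsl2, ← hsr2]
    field_simp
  have hvt' : vt * (sl * sr * (sl + sr)) = ql 2 * sr + qr 2 * sl := by
    rw [hvt, ← hsl2, ← hsr2]
    field_simp
  have h1 : qr 1 - ql 1 = (sr ^ 2 - sl ^ 2) * ut := by
    linear_combination -e1 + ut * e0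
  have h2 : (sl + sr) * (sr ^ 2 * ql 1 - sl ^ 2 * qr 1) = 0 := by
    linear_combination -(sl * sr * (sl + sr)) * h1 - (sr ^ 2 - sl ^ 2) * hut'
  have hkey : sr ^ 2 * ql 1 = sl ^ 2 * qr 1 := by
    rcases mul_eq_zero.mp h2 with h | h
    · exact absurd h hss
    · linarith
  have h4 : (sr * (sl + sr)) * (ut * sl ^ 2 - ql 1) = 0 := by
    linear_combination sl * hut' - hkey
  have hml : ql 1 = ut * ql 0 := by
    rw [← hsl2]
    rcases mul_eq_zero.mp h4 with h | h
    · exact absurd h (by positivity)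
    · linarith
  have h5 : (sl * (sl + sr)) * (ut * sr ^ 2 - qr 1) = 0 := by
    linear_combination sr * hut' + hkey
  have hmr : qr 1 = ut * qr 0 := by
    rw [← hsr2]
    rcases mul_eq_zero.mp h5 with h | h
    · exact absurd h (by positivity)
    · linarith
  have hn2p : (2 * vt * (qr 2 - ql 2) - (sr ^ 2 - sl ^ 2) * vt ^ 2) *
      (sl ^ 2 * sr ^ 2 * (sl + sr) ^ 2) =
      (qr 2 ^ 2 * sl ^ 2 - ql 2 ^ 2 * sr ^ 2) * (sl + sr) ^ 2 := by
    linear_combination (2 * (qr 2 - ql 2) * sl * sr * (sl + sr) -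
      (sr ^ 2 - sl ^ 2) * (vt * (sl * sr * (sl + sr)) + ql 2 * sr + qr 2 * sl)) * hvt'
  have hE : qr 3 - ql 3 = vt * (qr 2 - ql 2) + (sr ^ 2 - sl ^ 2) * (ut ^ 2 - vt ^ 2) / 2 := by
    linear_combination -e3 + vt * e2 + ((ut ^ 2 - vt ^ 2) / 2) * e0
  have hpl : pres γ ql * (2 * sl ^ 2) =
      (γ - 1) * (2 * sl ^ 2 * ql 3 - (ut ^ 2 * sl ^ 4 + ql 2 ^ 2)) := by
    simp only [pres]
    rw [hml, ← hsl2]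
    field_simp
  have hpr : pres γ qr * (2 * sr ^ 2) =
      (γ - 1) * (2 * sr ^ 2 * qr 3 - (ut ^ 2 * sr ^ 4 + qr 2 ^ 2)) := by
    simp only [pres]
    rw [hmr, ← hsr2]
    field_simp
  have h6 : (pres γ qr - pres γ ql) * (2 * sl ^ 2 * sr ^ 2 * (sl + sr) ^ 2) = 0 := by
    linear_combination (sl ^ 2 * (sl + sr) ^ 2) * hpr - (sr ^ 2 * (sl + sr) ^ 2) * hpl +
      ((γ - 1) * 2 * sl ^ 2 * sr ^ 2 * (sl + sr) ^ 2) * hE + (γ - 1) * hn2p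
  have hpp : pres γ qr = pres γ ql := by
    rcases mul_eq_zero.mp h6 with h | h
    · linarith
    · exact absurd h (by positivity)
  funext i
  fin_cases i
  · show qr 1 - ql 1 = ut * (qr 0 - ql 0)
    linear_combination hmr - hml
  · show qr 1 ^ 2 / qr 0 + pres γ qr - (ql 1 ^ 2 / ql 0 + pres γ ql) = ut * (qr 1 - ql 1)
    rw [hpp, hml, hmr]; field_simp; ring
  · show qr 1 * qr 2 / qr 0 - ql 1 * ql 2 / ql 0 = ut * (qr 2 - ql 2)
    rw [hml, hmr]; field_simp
  · show (qr 3 + pres γ qr) * qr 1 / qr 0 - (ql 3 + pres γ ql) * ql 1 / ql 0 = ut * (qr 3 - ql 3)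
    rw [hpp, hml, hmr]; field_simp; ring
end
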